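/- Let (X_i)_{i ∈ I} be a family of nonempty non-trivial topological spaces and let 𝓕 be a saturated filter on I. If the product ∏_{i ∈ I} X_i with the 𝓕-topology is compact and Hausdorff, then 𝓕 equals the cofinite filter on I. -/

import Mathlib

open Set TopologicalSpace Topology Filter

def FTopology {I : Type*} (X : I → Type*) [∀ i, TopologicalSpace (X i)]
    (F : Filter I) : TopologicalSpace (∀ i, X i) :=
  TopologicalSpace.generateFrom
    {S | ∃ U : ∀ i, Set (X i), (∀ i, IsOpen (U i)) ∧ {i | U i = Set.univ} ∈ F ∧
      S = Set.pi Set.univ U}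

section aux
variable {I : Type*} (X : I → Type*) [∀ i, TopologicalSpace (X i)] (F : Filter I)

theorem ftop_isOpen_box (U : ∀ i, Set (X i)) (hU : ∀ i, IsOpen (U i))
    (hF : {i | U i = Set.univ} ∈ F) : IsOpen[FTopology X F] (Set.pi Set.univ U) :=
  TopologicalSpace.GenerateOpen.basic _ ⟨U, hU, hF, rfl⟩

theorem ftop_continuous_eval (hsat : ∀ i : I, ({i}ᶜ : Set I) ∈ F) (j : I) :
    Continuous[FTopology X F, _] (fun x : ∀ i, X i => x j) := by
  classical
  rw [continuous_def]
  intro V hV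
  have h : (fun x : ∀ i, X i => x j) ⁻¹' V
      = Set.pi Set.univ (Function.update (fun i => (Set.univ : Set (X i))) j V) :=
    Set.eval_preimage
  rw [h]
  refine ftop_isOpen_box X F _ (fun i => ?_) ?_
  · rcases eq_or_ne i j with rfl | hij
    · simpa using hV
    · simp [Function.update_of_ne hij]
  · refine F.mem_of_superset (hsat j) fun i hi => ?_
    simp only [Set.mem_compl_iff, Set.mem_singleton_iff] at hi
    simp [Function.update_of_ne hi]

theorem ftop_continuous_update [DecidableEq I] (q : ∀ i, X i) (j : I) :
    Continuous[_, FTopology X F] (fun y : X j => Function.update q j y) := by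
  classical
  apply continuous_generateFrom_iff.mpr
  rintro S ⟨U, hU, hUF, rfl⟩
  by_cases h : ∀ i, i ≠ j → q i ∈ U i
  · have : (fun y : X j => Function.update q j y) ⁻¹' (Set.pi Set.univ U) = U j := by
      ext y
      simp only [Set.mem_preimage, Set.mem_pi, Set.mem_univ, forall_true_left,
        Function.update_apply]
      constructor
      · intro hy; have := hy j; simpa using this
      · intro hy i
        rcases eq_or_ne i j with rfl | hij
        · simpa using hy
        · simpa [hij] using h i hij
    rw [this]; exact hU j
  · have : (fun y : X j => Function.update q j y) ⁻¹' (Set.pi Set.univ U) = ∅ := by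
      push_neg at h
      obtain ⟨i, hij, hi⟩ := h
      ext y
      simp only [Set.mem_preimage, Set.mem_pi, Set.mem_univ, forall_true_left,
        Set.mem_empty_iff_false, iff_false]
      intro hy
      have := hy i
      rw [Function.update_of_ne hij] at this
      exact hi this
    rw [this]; exact isOpen_empty

end aux

theorem fTopology_compact_t2_cofinite {I : Type*} (X : I → Type*)
    [∀ i, TopologicalSpace (X i)] [∀ i, Nonempty (X i)]
    (hnt : ∀ i, ∃ U : Set (X i), IsOpen U ∧ U ≠ ∅ ∧ U ≠ Set.univ)
    (F : Filter I) (hsat : ∀ i : I, ({i}ᶜ : Set I) ∈ F)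
    (hc : @CompactSpace (∀ i, X i) (FTopology X F))
    (hh : @T2Space (∀ i, X i) (FTopology X F)) :
    F = Filter.cofinite := by
  classical
  letI T : TopologicalSpace (∀ i, X i) := FTopology X F
  have hproj : ∀ j, Continuous (fun x : ∀ i, X i => x j) := ftop_continuous_eval X F hsat
  -- each X i is T2
  have ht2 : ∀ i, T2Space (X i) := by
    intro j
    have hq : ∀ i, X i := fun i => Classical.arbitrary _
    exact T2Space.of_injective_continuous
      (f := fun y : X j => Function.update hq j y)
      (fun a b hab => by simpa using congrFun hab j)
      (ftop_continuous_update X F hq j)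
  -- two separated points in each X i
  have hsep : ∀ i, ∃ (a b : X i) (V W : Set (X i)),
      IsOpen V ∧ IsOpen W ∧ a ∈ V ∧ b ∈ W ∧ Disjoint V W := by
    intro i
    obtain ⟨U, hUo, hne, hnu⟩ := hnt i
    obtain ⟨a, ha⟩ := Set.nonempty_iff_ne_empty.mpr hne
    obtain ⟨b, hb⟩ := (Set.ne_univ_iff_exists_notMem U).mp hnu
    have hab : a ≠ b := fun h => hb (h ▸ ha)
    haveI := ht2 i
    obtain ⟨V, W, hV, hW, haV, hbW, hVW⟩ := t2_separation hab
    exact ⟨a, b, V, W, hV, hW, haV, hbW, hVW⟩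
  choose a b V W hVo hWo haV hbW hVW using hsep
  have hab : ∀ i, a i ≠ b i := fun i h =>
    (hVW i).ne_of_mem (haV i) (hbW i) h
  refine le_antisymm ?_ ?_
  · -- F ≤ cofinite
    intro t ht
    have hfin : (tᶜ : Set I).Finite := ht
    have : t = ⋂ i ∈ tᶜ, ({i}ᶜ : Set I) := by
      ext x
      simp only [Set.mem_iInter, Set.mem_compl_iff, Set.mem_singleton_iff]
      constructor
      · rintro hx i hi rfl; exact hi hx
      · intro hx; by_contra hxt; exact hx x hxt rfl
    rw [this]
    exact (Filter.biInter_mem hfin).mpr fun i _ => hsat i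
  · -- cofinite ≤ F : every s ∈ F is cofinite
    intro s hs
    simp only [Filter.mem_cofinite]
    by_contra hJ
    set J : Set I := sᶜ with hJdef
    have hJinf : J.Infinite := hJ
    -- the closed discrete infinite set S
    set C : ∀ i, Set (X i) := fun i => if i ∈ J then {a i, b i} else {b i} with hC
    set S : Set (∀ i, X i) := Set.pi Set.univ C with hSdef
    have hCclosed : ∀ i, IsClosed (C i) := by
      intro i
      haveI := ht2 i
      simp only [hC]
      split
      · exact (((Set.finite_singleton _).insert _)).isClosed
      · exact isClosed_singleton
    have hSclosed : IsClosed S := by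
      rw [hSdef, Set.pi_def]
      exact isClosed_biInter fun i _ => (hCclosed i).preimage (hproj i)
    have hScompact : IsCompact S := hSclosed.isCompact
    -- S is infinite
    have hSinf : S.Infinite := by
      haveI : Infinite J := hJinf.to_subtype
      refine Set.infinite_of_injective_forall_mem
        (f := fun j : J => fun i => if i = (j : I) then a i else b i) ?_ ?_
      · intro j j' hjj'
        by_contra hne
        have hne' : (j : I) ≠ (j' : I) := fun h => hne (Subtype.ext h)
        have h1 := congrFun hjj' (j : I)
        simp only [if_pos rfl, if_neg hne'] at h1
        exact hab _ h1
      · intro j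
        have : ∀ i ∈ (Set.univ : Set I), (if i = (j : I) then a i else b i) ∈ C i := by
          intro i _
          simp only [hC]
          by_cases hij : i = (j : I)
          · subst hij; simp [j.2]
          · rw [if_neg hij]; split <;> simp
        exact this
    -- discreteness boxes
    set B : (∀ i, X i) → Set (∀ i, X i) := fun x =>
      Set.pi Set.univ (fun i => if i ∈ J then (if x i = a i then V i else W i) else Set.univ)
      with hB
    have hBopen : ∀ x, IsOpen (B x) := by
      intro x
      refine ftop_isOpen_box X F _ (fun i => ?_) ?_
      · split
        · split; exacts [hVo i, hWo i]
        · exact isOpen_univ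
      · refine F.mem_of_superset hs fun i hi => ?_
        have : i ∉ J := fun h => h hi
        simp [this]
    have hmemB : ∀ x ∈ S, x ∈ B x := by
      intro x hx
      rw [hB]
      intro i _
      dsimp only
      by_cases hiJ : i ∈ J
      · rw [if_pos hiJ]
        have hxi : x i ∈ C i := hx i (Set.mem_univ i)
        simp only [hC] at hxi
        rw [if_pos hiJ] at hxi
        by_cases hxa : x i = a i
        · rw [if_pos hxa, hxa]; exact haV i
        · rw [if_neg hxa]
          rcases hxi with h | h
          · exact absurd h hxa
          · rw [h]; exact hbW i
      · rw [if_neg hiJ]; exact Set.mem_univ _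
    have hBinter : ∀ x ∈ S, ∀ y ∈ S, y ∈ B x → y = x := by
      intro x hx y hy hyB
      funext i
      by_cases hiJ : i ∈ J
      · have hxi : x i ∈ C i := hx i (Set.mem_univ i)
        have hyi : y i ∈ C i := hy i (Set.mem_univ i)
        simp only [hC] at hxi hyi
        rw [if_pos hiJ] at hxi hyi
        have hyB' := hyB i (Set.mem_univ i)
        dsimp only at hyB'
        rw [if_pos hiJ] at hyB'
        by_cases hxa : x i = a i
        · rw [if_pos hxa] at hyB'
          rcases hyi with h | h
          · rw [h, hxa]
          · exfalso
            rw [h] at hyB'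
            exact (hVW i).ne_of_mem hyB' (hbW i) rfl
        · rw [if_neg hxa] at hyB'
          have hxb : x i = b i := by
            rcases hxi with h | h
            · exact absurd h hxa
            · exact h
          rcases hyi with h | h
          · exfalso
            rw [h] at hyB'
            exact (hVW i).ne_of_mem (haV i) hyB' rfl
          · rw [h, hxb]
      · have hxi : x i ∈ C i := hx i (Set.mem_univ i)
        have hyi : y i ∈ C i := hy i (Set.mem_univ i)
        simp only [hC] at hxi hyi
        rw [if_neg hiJ] at hxi hyi
        rw [Set.mem_singleton_iff] at hxi hyi
        rw [hxi, hyi]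
    -- finite subcover contradiction
    obtain ⟨t, ht⟩ := hScompact.elim_finite_subcover (fun x : S => B x.val)
      (fun x => hBopen x.val) (fun y hy => Set.mem_iUnion.mpr ⟨⟨y, hy⟩, hmemB y hy⟩)
    have : (S \ (↑(t.image (fun x : S => x.val)) : Set (∀ i, X i))).Nonempty :=
      (hSinf.diff (Finset.finite_toSet _)).nonempty
    obtain ⟨y, hyS, hyt⟩ := this
    obtain ⟨x, hxt, hyx⟩ := Set.mem_iUnion₂.mp (ht hyS)
    have : y = x.val := hBinter x.val x.2 y hyS hyx
    exact hyt (by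
      rw [this]
      exact Finset.mem_coe.mpr (Finset.mem_image.mpr ⟨x, hxt, rfl⟩))
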